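/- Semicontinuity of averaged ball extrema: let u : ℝⁿ → ℝ be bounded and ε > 0. Then the function x ↦ (1/ε) ∫₀^ε sup_{B_t(x)} u dt is lower semicontinuous on ℝⁿ (hence Borel measurable), and the function x ↦ (1/ε) ∫₀^ε inf_{B_t(x)} u dt is upper semicontinuous on ℝⁿ (hence Borel measurable). -/

import Mathlib

open MeasureTheory Metric Set intervalIntegral

private lemma abs_sSup_image_ball_le {n : ℕ} {v : EuclideanSpace ℝ (Fin n) → ℝ} {M : ℝ}
    (hM : 0 ≤ M) (hv : ∀ x, |v x| ≤ M) (x : EuclideanSpace ℝ (Fin n)) (t : ℝ) :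
    |sSup (v '' Metric.ball x t)| ≤ M := by
  rcases le_or_gt t 0 with ht | ht
  · rw [Metric.ball_eq_empty.2 ht, Set.image_empty, Real.sSup_empty, abs_zero]; exact hM
  · have hne : (v '' Metric.ball x t).Nonempty := (Metric.nonempty_ball.2 ht).image v
    have hub : ∀ b ∈ v '' Metric.ball x t, b ≤ M := by
      rintro b ⟨z, _, rfl⟩; exact (abs_le.1 (hv z)).2
    rw [abs_le]
    refine ⟨?_, csSup_le hne hub⟩
    obtain ⟨b, hb⟩ := hne
    calc -M ≤ b := by obtain ⟨z, _, rfl⟩ := hb; exact (abs_le.1 (hv z)).1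
      _ ≤ sSup (v '' Metric.ball x t) := le_csSup ⟨M, hub⟩ hb

private lemma sSup_ball_mono {n : ℕ} {v : EuclideanSpace ℝ (Fin n) → ℝ} {M : ℝ}
    (hv : ∀ x, |v x| ≤ M) {x y : EuclideanSpace ℝ (Fin n)} {s t : ℝ} (hs : 0 < s)
    (hsub : Metric.ball x s ⊆ Metric.ball y t) :
    sSup (v '' Metric.ball x s) ≤ sSup (v '' Metric.ball y t) := by
  refine csSup_le_csSup ⟨M, ?_⟩ ((Metric.nonempty_ball.2 hs).image v) (Set.image_mono hsub)
  rintro b ⟨z, _, rfl⟩; exact (abs_le.1 (hv z)).2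

private lemma gInt {n : ℕ} {v : EuclideanSpace ℝ (Fin n) → ℝ} {M : ℝ}
    (hM : 0 ≤ M) (hv : ∀ x, |v x| ≤ M) (x : EuclideanSpace ℝ (Fin n)) {a b : ℝ}
    (ha : 0 ≤ a) (hb : 0 ≤ b) :
    IntervalIntegrable (fun t => sSup (v '' Metric.ball x t)) volume a b := by
  have hmono : Monotone (fun t : ℝ => if t ≤ 0 then -M else sSup (v '' Metric.ball x t)) := by
    intro s t hst
    by_cases hs : s ≤ 0
    · by_cases ht : t ≤ 0
      · simp [hs, ht]
      · simp only [if_pos hs, if_neg ht]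
        exact (abs_le.1 (abs_sSup_image_ball_le hM hv x t)).1
    · have ht : ¬ t ≤ 0 := fun h => hs (hst.trans h)
      simp only [if_neg hs, if_neg ht]
      exact sSup_ball_mono hv (not_le.1 hs) (Metric.ball_subset_ball hst)
  have h := hmono.intervalIntegrable (μ := volume) (a := a) (b := b)
  rw [intervalIntegrable_iff] at h ⊢
  refine h.congr_fun (fun t ht => ?_) measurableSet_uIoc
  have h0 : 0 < t := lt_of_le_of_lt (le_min ha hb) ht.1
  simp [not_le.2 h0]

private lemma key_est {n : ℕ} {v : EuclideanSpace ℝ (Fin n) → ℝ} {M : ℝ}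
    (hM : 0 ≤ M) (hv : ∀ x, |v x| ≤ M) {ε : ℝ} (hε : 0 < ε)
    (x y : EuclideanSpace ℝ (Fin n)) :
    ∫ t in (0:ℝ)..ε, sSup (v '' Metric.ball x t) ≤
      (∫ t in (0:ℝ)..ε, sSup (v '' Metric.ball y t)) + 2 * M * dist x y := by
  set d : ℝ := dist x y with hdd
  have hd : 0 ≤ d := dist_nonneg
  -- step 1 : pointwise (a.e.) comparison after translation
  have hshift : IntervalIntegrable (fun t => sSup (v '' Metric.ball y (t + d))) volume 0 ε := by
    have h := (gInt hM hv y (by linarith : (0:ℝ) ≤ 0 + d) (by linarith : (0:ℝ) ≤ ε + d)).comp_add_right d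
    simpa using h
  have h1 : ∫ t in (0:ℝ)..ε, sSup (v '' Metric.ball x t) ≤
      ∫ t in (0:ℝ)..ε, sSup (v '' Metric.ball y (t + d)) := by
    refine integral_mono_ae_restrict hε.le (gInt hM hv x le_rfl hε.le) hshift ?_
    have h0 : ∀ᵐ t : ℝ ∂volume, t ≠ 0 := by
      rw [ae_iff]
      have : {t : ℝ | ¬ t ≠ 0} = {0} := by ext t; simp
      rw [this]; exact Real.volume_singleton
    filter_upwards [ae_restrict_of_ae h0, ae_restrict_mem measurableSet_Icc] with t ht0 htI
    have ht : 0 < t := lt_of_le_of_ne htI.1 (Ne.symm ht0)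
    exact sSup_ball_mono hv ht (Metric.ball_subset_ball' (le_of_eq (by rw [hdd])))
  -- step 2 : translation of the integral
  have h2 : ∫ t in (0:ℝ)..ε, sSup (v '' Metric.ball y (t + d)) =
      ∫ t in d..(ε + d), sSup (v '' Metric.ball y t) := by
    simpa using integral_comp_add_right (a := 0) (b := ε) (fun t => sSup (v '' Metric.ball y t)) d
  -- step 3 : split the translated integral
  have Id0 : IntervalIntegrable (fun t => sSup (v '' Metric.ball y t)) volume d 0 :=
    gInt hM hv y hd le_rfl
  have I0e : IntervalIntegrable (fun t => sSup (v '' Metric.ball y t)) volume 0 ε :=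
    gInt hM hv y le_rfl hε.le
  have Ieed : IntervalIntegrable (fun t => sSup (v '' Metric.ball y t)) volume ε (ε + d) :=
    gInt hM hv y hε.le (by linarith)
  have h3 : (∫ t in d..(0:ℝ), sSup (v '' Metric.ball y t)) +
      ∫ t in (0:ℝ)..(ε + d), sSup (v '' Metric.ball y t) =
      ∫ t in d..(ε + d), sSup (v '' Metric.ball y t) :=
    integral_add_adjacent_intervals Id0 (I0e.trans Ieed)
  have h4 : (∫ t in (0:ℝ)..ε, sSup (v '' Metric.ball y t)) +
      ∫ t in ε..(ε + d), sSup (v '' Metric.ball y t) =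
      ∫ t in (0:ℝ)..(ε + d), sSup (v '' Metric.ball y t) :=
    integral_add_adjacent_intervals I0e Ieed
  -- bounds on small pieces
  have hb1 : ∫ t in ε..(ε + d), sSup (v '' Metric.ball y t) ≤ M * d := by
    have := integral_mono_on (by linarith : ε ≤ ε + d) Ieed intervalIntegrable_const
      (fun t _ => (abs_le.1 (abs_sSup_image_ball_le hM hv y t)).2)
    rw [intervalIntegral.integral_const, smul_eq_mul] at this
    calc ∫ t in ε..(ε + d), sSup (v '' Metric.ball y t) ≤ (ε + d - ε) * M := this
      _ = M * d := by ring
  have hb2 : -(M * d) ≤ ∫ t in (0:ℝ)..d, sSup (v '' Metric.ball y t) := by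
    have := integral_mono_on hd intervalIntegrable_const (gInt hM hv y le_rfl hd)
      (fun t _ => (abs_le.1 (abs_sSup_image_ball_le hM hv y t)).1)
    rw [intervalIntegral.integral_const, smul_eq_mul] at this
    calc -(M * d) = (d - 0) * (-M) := by ring
      _ ≤ _ := this
  have hsymm : (∫ t in d..(0:ℝ), sSup (v '' Metric.ball y t)) =
      -∫ t in (0:ℝ)..d, sSup (v '' Metric.ball y t) := integral_symm 0 d
  rw [hsymm] at h3
  calc ∫ t in (0:ℝ)..ε, sSup (v '' Metric.ball x t)
      ≤ ∫ t in (0:ℝ)..ε, sSup (v '' Metric.ball y (t + d)) := h1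
    _ = ∫ t in d..(ε + d), sSup (v '' Metric.ball y t) := h2
    _ ≤ (∫ t in (0:ℝ)..ε, sSup (v '' Metric.ball y t)) + 2 * M * d := by linarith

private lemma aux_cont {n : ℕ} {v : EuclideanSpace ℝ (Fin n) → ℝ} {M : ℝ}
    (hM : 0 ≤ M) (hv : ∀ x, |v x| ≤ M) {ε : ℝ} (hε : 0 < ε) :
    Continuous fun x : EuclideanSpace ℝ (Fin n) =>
      ∫ t in (0:ℝ)..ε, sSup (v '' Metric.ball x t) := by
  have hlip : LipschitzWith (2 * M).toNNReal
      (fun x : EuclideanSpace ℝ (Fin n) => ∫ t in (0:ℝ)..ε, sSup (v '' Metric.ball x t)) := by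
    refine LipschitzWith.of_dist_le_mul fun x y => ?_
    rw [Real.dist_eq, Real.coe_toNNReal _ (by positivity)]
    have h1 := key_est hM hv hε x y
    have h2 := key_est hM hv hε y x
    rw [dist_comm y x] at h2
    rw [abs_sub_le_iff]
    constructor <;> linarith
  exact hlip.continuous

/-- **Semicontinuity of averaged ball extrema.** For `u : ℝⁿ → ℝ` bounded and `ε > 0`, the
function `x ↦ (1/ε) ∫₀^ε sup_{B_t(x)} u dt` is lower semicontinuous (hence Borel) and
`x ↦ (1/ε) ∫₀^ε inf_{B_t(x)} u dt` is upper semicontinuous (hence Borel). -/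
theorem averaged_ball_extrema_semicontinuous (n : ℕ)
    (u : EuclideanSpace ℝ (Fin n) → ℝ) (hu : ∃ M, ∀ x, |u x| ≤ M)
    (ε : ℝ) (hε : 0 < ε) :
    (LowerSemicontinuous fun x : EuclideanSpace ℝ (Fin n) =>
        (1 / ε) * ∫ t in (0 : ℝ)..ε, sSup (u '' Metric.ball x t)) ∧
    (Measurable fun x : EuclideanSpace ℝ (Fin n) =>
        (1 / ε) * ∫ t in (0 : ℝ)..ε, sSup (u '' Metric.ball x t)) ∧
    (UpperSemicontinuous fun x : EuclideanSpace ℝ (Fin n) =>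
        (1 / ε) * ∫ t in (0 : ℝ)..ε, sInf (u '' Metric.ball x t)) ∧
    (Measurable fun x : EuclideanSpace ℝ (Fin n) =>
        (1 / ε) * ∫ t in (0 : ℝ)..ε, sInf (u '' Metric.ball x t)) := by
  obtain ⟨M₀, hM₀⟩ := hu
  set M : ℝ := max M₀ 0 with hMdef
  have hM : 0 ≤ M := le_max_right _ _
  have hu' : ∀ x, |u x| ≤ M := fun x => (hM₀ x).trans (le_max_left _ _)
  have hneg : ∀ x, |(fun z => -u z) x| ≤ M := fun x => by
    simpa [abs_neg] using hu' x
  have hcsup : Continuous fun x : EuclideanSpace ℝ (Fin n) =>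
      (1 / ε) * ∫ t in (0 : ℝ)..ε, sSup (u '' Metric.ball x t) :=
    continuous_const.mul (aux_cont hM hu' hε)
  have heq : ∀ (x : EuclideanSpace ℝ (Fin n)) (t : ℝ),
      sInf (u '' Metric.ball x t) = -sSup ((fun z => -u z) '' Metric.ball x t) := by
    intro x t
    have himg : (fun z => -u z) '' Metric.ball x t = -(u '' Metric.ball x t) := by
      rw [show (fun z => -u z) = (fun r : ℝ => -r) ∘ u from rfl, Set.image_comp,
        Set.image_neg_eq_neg]
    rw [himg, Real.sInf_def]
  have hcinf : Continuous fun x : EuclideanSpace ℝ (Fin n) =>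
      (1 / ε) * ∫ t in (0 : ℝ)..ε, sInf (u '' Metric.ball x t) := by
    have hc : Continuous fun x : EuclideanSpace ℝ (Fin n) =>
        -((1 / ε) * ∫ t in (0 : ℝ)..ε, sSup ((fun z => -u z) '' Metric.ball x t)) :=
      (continuous_const.mul (aux_cont hM hneg hε)).neg
    convert hc using 2 with x
    rw [← mul_neg, ← intervalIntegral.integral_neg]
    congr 1
    exact intervalIntegral.integral_congr fun t _ => heq x t
  exact ⟨hcsup.lowerSemicontinuous, hcsup.measurable,
    hcinf.upperSemicontinuous, hcinf.measurable⟩
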